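/- For u ≥ 0 and t > 0, the function Ψ_u(t) := 1 - Φ(-√(2t) - u/√(2t)) - e^{-2u} Φ(√(2t) - u/√(2t)) satisfies ∂²Ψ_u(t)/∂u² ≤ 0, i.e., u ↦ Ψ_u(t) is concave, where Φ is the standard normal CDF. -/

import Mathlib

open MeasureTheory Real

/-- The standard normal cumulative distribution function. -/
noncomputable def Phi (x : ℝ) : ℝ := ∫ y in Set.Iic x, Real.exp (-y ^ 2 / 2) / Real.sqrt (2 * Real.pi)

/-- `Psi ε t` is the probability that a pair of left-right coalescing Brownian motions
started at distance `ε` apart has not met by time `t`. -/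
noncomputable def Psi (ε t : ℝ) : ℝ :=
  1 - Phi (-Real.sqrt (2 * t) - ε / Real.sqrt (2 * t))
    - Real.exp (-2 * ε) * Phi (Real.sqrt (2 * t) - ε / Real.sqrt (2 * t))

/-- The standard normal density. -/
noncomputable def gauss (x : ℝ) : ℝ := Real.exp (-x ^ 2 / 2) / Real.sqrt (2 * Real.pi)

lemma gauss_cont : Continuous gauss := by
  unfold gauss; fun_prop

lemma gauss_nonneg (x : ℝ) : 0 ≤ gauss x := by
  unfold gauss; positivity

lemma gauss_integrable : Integrable gauss := by
  have h := (integrable_exp_neg_mul_sq (by norm_num : (0:ℝ) < 1/2)).mul_const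
    (Real.sqrt (2 * Real.pi))⁻¹
  have h2 : gauss = fun x : ℝ => Real.exp (-(1/2) * x ^ 2) * (Real.sqrt (2 * Real.pi))⁻¹ := by
    funext x; unfold gauss; rw [div_eq_mul_inv]; congr 2; ring
  rw [h2]; exact h

lemma Phi_nonneg (x : ℝ) : 0 ≤ Phi x := by
  unfold Phi
  exact setIntegral_nonneg measurableSet_Iic fun y _ => by positivity

lemma Phi_hasDerivAt (x : ℝ) : HasDerivAt Phi (gauss x) x := by
  have heq : ∀ y : ℝ, Phi y = Phi 0 + ∫ z in (0:ℝ)..y, gauss z := by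
    intro y
    have := intervalIntegral.integral_Iic_sub_Iic
      (μ := volume) (f := gauss) gauss_integrable.integrableOn gauss_integrable.integrableOn
      (a := 0) (b := y)
    unfold Phi gauss at *
    linarith
  have hd : HasDerivAt (fun y : ℝ => Phi 0 + ∫ z in (0:ℝ)..y, gauss z) (gauss x) x :=
    (intervalIntegral.integral_hasDerivAt_right
      gauss_integrable.intervalIntegrable
      (gauss_cont.stronglyMeasurableAtFilter _ _)
      gauss_cont.continuousAt).const_add (Phi 0)
  exact hd.congr_of_eventuallyEq (Filter.Eventually.of_forall heq)

lemma gauss_hasDerivAt (x : ℝ) : HasDerivAt gauss (-x * gauss x) x := by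
  have h1 : HasDerivAt (fun y : ℝ => -y ^ 2 / 2) (-x) x := by
    have := ((hasDerivAt_pow 2 x).neg).div_const 2
    refine this.congr_deriv ?_
    simp; ring
  have h2 := (h1.exp).div_const (Real.sqrt (2 * Real.pi))
  have h3 : HasDerivAt gauss (Real.exp (-x ^ 2 / 2) * -x / Real.sqrt (2 * Real.pi)) x := h2
  convert h3 using 1
  unfold gauss
  ring

lemma gauss_key {s : ℝ} (hs : s ≠ 0) (u : ℝ) :
    Real.exp (-2 * u) * gauss (s - u / s) = gauss (-s - u / s) := by
  unfold gauss
  rw [div_eq_mul_inv, div_eq_mul_inv, ← mul_assoc, ← Real.exp_add]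
  congr 2
  field_simp
  ring

lemma inner1_hasDerivAt (s u : ℝ) : HasDerivAt (fun v : ℝ => -s - v / s) (-(1 / s)) u := by
  have := ((hasDerivAt_id u).div_const s).const_sub (-s)
  simpa using this

lemma inner2_hasDerivAt (s u : ℝ) : HasDerivAt (fun v : ℝ => s - v / s) (-(1 / s)) u := by
  have := ((hasDerivAt_id u).div_const s).const_sub s
  simpa using this

lemma exp_hasDerivAt (u : ℝ) :
    HasDerivAt (fun v : ℝ => Real.exp (-2 * v)) (-2 * Real.exp (-2 * u)) u := by
  have h0 : HasDerivAt (fun v : ℝ => -2 * v) (-2 : ℝ) u := by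
    simpa using (hasDerivAt_id u).const_mul (-2 : ℝ)
  simpa [mul_comm] using h0.exp

lemma f1_hasDerivAt {s : ℝ} (hs : s ≠ 0) (u : ℝ) :
    HasDerivAt (fun v : ℝ => 1 - Phi (-s - v / s) - Real.exp (-2 * v) * Phi (s - v / s))
      (2 * gauss (-s - u / s) / s + 2 * Real.exp (-2 * u) * Phi (s - u / s)) u := by
  have hA : HasDerivAt (fun v : ℝ => Phi (-s - v / s)) (gauss (-s - u / s) * -(1 / s)) u :=
    (Phi_hasDerivAt _).comp u (inner1_hasDerivAt s u)
  have hB : HasDerivAt (fun v : ℝ => Phi (s - v / s)) (gauss (s - u / s) * -(1 / s)) u :=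
    (Phi_hasDerivAt _).comp u (inner2_hasDerivAt s u)
  have h := (hA.const_sub 1).sub ((exp_hasDerivAt u).mul hB)
  refine h.congr_deriv ?_
  rw [← gauss_key hs u]
  field_simp
  ring

lemma f2_hasDerivAt {s : ℝ} (hs : s ≠ 0) (u : ℝ) :
    HasDerivAt (fun v : ℝ => 2 * gauss (-s - v / s) / s + 2 * Real.exp (-2 * v) * Phi (s - v / s))
      (2 * (-(-s - u / s) * gauss (-s - u / s) * -(1 / s)) / s
        + (2 * (-2 * Real.exp (-2 * u)) * Phi (s - u / s)
          + 2 * Real.exp (-2 * u) * (gauss (s - u / s) * -(1 / s)))) u := by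
  have hGA : HasDerivAt (fun v : ℝ => gauss (-s - v / s))
      (-(-s - u / s) * gauss (-s - u / s) * -(1 / s)) u :=
    (gauss_hasDerivAt _).comp u (inner1_hasDerivAt s u)
  have hB : HasDerivAt (fun v : ℝ => Phi (s - v / s)) (gauss (s - u / s) * -(1 / s)) u :=
    (Phi_hasDerivAt _).comp u (inner2_hasDerivAt s u)
  have h1 := (hGA.const_mul 2).div_const s
  have h2 := ((exp_hasDerivAt u).const_mul 2).mul hB
  exact h1.add h2

lemma f2_nonpos {s u : ℝ} (hs : 0 < s) (hu : 0 ≤ u) :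
    2 * (-(-s - u / s) * gauss (-s - u / s) * -(1 / s)) / s
        + (2 * (-2 * Real.exp (-2 * u)) * Phi (s - u / s)
          + 2 * Real.exp (-2 * u) * (gauss (s - u / s) * -(1 / s))) ≤ 0 := by
  have h1 : 0 ≤ s + u / s := by positivity
  have h2 : 0 ≤ gauss (-s - u / s) := gauss_nonneg _
  have h3 : 0 ≤ Phi (s - u / s) := Phi_nonneg _
  have h4 : 0 ≤ gauss (s - u / s) := gauss_nonneg _
  have h5 : 0 < Real.exp (-2 * u) := Real.exp_pos _
  have e1 : 2 * (-(-s - u / s) * gauss (-s - u / s) * -(1 / s)) / s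
      = -(2 * ((s + u / s) * gauss (-s - u / s)) * (1 / s) * (1 / s)) := by ring
  have e2 : 2 * (-2 * Real.exp (-2 * u)) * Phi (s - u / s)
      = -(4 * (Real.exp (-2 * u) * Phi (s - u / s))) := by ring
  have e3 : 2 * Real.exp (-2 * u) * (gauss (s - u / s) * -(1 / s))
      = -(2 * (Real.exp (-2 * u) * gauss (s - u / s)) * (1 / s)) := by ring
  rw [e1, e2, e3]
  have hs1 : (0:ℝ) ≤ 1 / s := by positivity
  have t1 : 0 ≤ 2 * ((s + u / s) * gauss (-s - u / s)) * (1 / s) * (1 / s) := by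
    apply mul_nonneg; apply mul_nonneg; apply mul_nonneg <;> try norm_num
    all_goals first
      | exact mul_nonneg h1 h2
      | exact hs1
  have t2 : 0 ≤ 4 * (Real.exp (-2 * u) * Phi (s - u / s)) := by positivity
  have t3 : 0 ≤ 2 * (Real.exp (-2 * u) * gauss (s - u / s)) * (1 / s) := by
    apply mul_nonneg; apply mul_nonneg; norm_num
    · exact mul_nonneg h5.le h4
    · exact hs1
  linarith

/-- For `t > 0`, `∂²Ψ_u(t)/∂u² ≤ 0` for `u ≥ 0`, i.e., `u ↦ Ψ_u(t)` is concave on `[0, ∞)`. -/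
theorem Psi_concave_in_u : ∀ t : ℝ, 0 < t →
    (∀ u : ℝ, 0 ≤ u → deriv (deriv (fun v : ℝ => Psi v t)) u ≤ 0) ∧
    ConcaveOn ℝ (Set.Ici 0) (fun u : ℝ => Psi u t) := by
  intro t ht
  set s : ℝ := Real.sqrt (2 * t) with hs_def
  have hs : 0 < s := Real.sqrt_pos.mpr (by linarith)
  have hsne : s ≠ 0 := ne_of_gt hs
  have hPsi : (fun v : ℝ => Psi v t)
      = fun v : ℝ => 1 - Phi (-s - v / s) - Real.exp (-2 * v) * Phi (s - v / s) := rfl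
  have hderiv1 : deriv (fun v : ℝ => Psi v t)
      = fun u : ℝ => 2 * gauss (-s - u / s) / s + 2 * Real.exp (-2 * u) * Phi (s - u / s) := by
    funext u
    rw [hPsi]
    exact (f1_hasDerivAt hsne u).deriv
  have hderiv2 : ∀ u : ℝ, deriv (deriv (fun v : ℝ => Psi v t)) u
      = 2 * (-(-s - u / s) * gauss (-s - u / s) * -(1 / s)) / s
        + (2 * (-2 * Real.exp (-2 * u)) * Phi (s - u / s)
          + 2 * Real.exp (-2 * u) * (gauss (s - u / s) * -(1 / s))) := by
    intro u
    rw [hderiv1]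
    exact (f2_hasDerivAt hsne u).deriv
  have hmain : ∀ u : ℝ, 0 ≤ u → deriv (deriv (fun v : ℝ => Psi v t)) u ≤ 0 := by
    intro u hu
    rw [hderiv2 u]
    exact f2_nonpos hs hu
  refine ⟨hmain, ?_⟩
  apply concaveOn_of_deriv2_nonpos (convex_Ici 0)
  · have : Differentiable ℝ (fun v : ℝ => Psi v t) := by
      intro u
      rw [hPsi]
      exact (f1_hasDerivAt hsne u).differentiableAt
    exact this.continuous.continuousOn
  · intro u _
    rw [hPsi]
    exact ((f1_hasDerivAt hsne u).differentiableAt).differentiableWithinAt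
  · intro u _
    rw [hderiv1]
    exact ((f2_hasDerivAt hsne u).differentiableAt).differentiableWithinAt
  · intro u hu
    have hu' : 0 ≤ u := by
      rw [interior_Ici] at hu
      exact le_of_lt hu
    simpa [Function.iterate_succ_apply', Function.iterate_zero_apply] using hmain u hu'
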